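/- Let n be a positive integer. Let F ⊆ {0,1}^{2n+1} be the set of (A, y, B) with A, y ∈ {0,1}^n, B ∈ {0,1} satisfying B ≥ A_j − (1 − y_j) for every j and B ≤ ∑_{k∈S} A_k + (1 − y_j) + ∑_{k∉S} y_k for every nonempty S ⊆ {1,…,n} and j ∈ S, and let F_mon ⊆ {0,1}^{2n+1} be the set of (A, y, B) satisfying B ≥ A_j − (1 − y_j) and B ≤ ∑_{k=1}^n A_k + (1 − y_j) for every j. Then for every fixed A ∈ {0,1}^n and B ∈ {0,1}, the maximum of ∑_{j=1}^n y_j over {y ∈ {0,1}^n : (A, y, B) ∈ F} equals the maximum of ∑_{j=1}^n y_j over {y ∈ {0,1}^n : (A, y, B) ∈ F_mon} (both sets are nonempty since y = 0 is always feasible). Hence the monotonized system has the same maximal y-solutions as the original relaxed clause. -/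
import Mathlib


/-- For every fixed 0/1 vector `A` and 0/1 value `B`, the maximum of
`∑_j y_j` over the 0/1 vectors `y` feasible for the original relaxed
equivalence clause equals the maximum over those feasible for its
monotonized version; both maxima exist. -/
theorem monotonized_same_maximal_y (n : ℕ) (hn : 0 < n)
    (A : Fin n → ℤ) (B : ℤ)
    (hA : ∀ j, A j = 0 ∨ A j = 1) (hB : B = 0 ∨ B = 1) :
    ∃ M : ℤ,
      IsGreatest {s : ℤ | ∃ y : Fin n → ℤ, (∀ j, y j = 0 ∨ y j = 1) ∧
          (∀ j, A j - (1 - y j) ≤ B) ∧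
          (∀ S : Finset (Fin n), S.Nonempty → ∀ j ∈ S,
            B ≤ (∑ k ∈ S, A k) + (1 - y j) + ∑ k ∈ Sᶜ, y k) ∧
          s = ∑ j, y j} M ∧
      IsGreatest {s : ℤ | ∃ y : Fin n → ℤ, (∀ j, y j = 0 ∨ y j = 1) ∧
          (∀ j, A j - (1 - y j) ≤ B) ∧
          (∀ j, B ≤ (∑ k, A k) + (1 - y j)) ∧
          s = ∑ j, y j} M := by
  classical
  have hA0 : ∀ j, (0:ℤ) ≤ A j := fun j => by rcases hA j with h|h <;> simp [h]
  have hA1 : ∀ j, A j ≤ 1 := fun j => by rcases hA j with h|h <;> simp [h]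
  rcases hB with hB | hB
  · -- B = 0 : optimum is y = 1 - A
    subst hB
    refine ⟨∑ j, (1 - A j),
      ⟨⟨fun j => 1 - A j, ?_, ?_, ?_, rfl⟩, ?_⟩,
      ⟨fun j => 1 - A j, ?_, ?_, ?_, rfl⟩, ?_⟩
    · intro j; rcases hA j with h|h <;> simp [h]
    · intro j; simp
    · intro S hS j hj
      have h1 : (0:ℤ) ≤ ∑ k ∈ S, A k := Finset.sum_nonneg fun k _ => hA0 k
      have h2 : (0:ℤ) ≤ ∑ k ∈ Sᶜ, (1 - A k) :=
        Finset.sum_nonneg fun k _ => by linarith [hA1 k]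
      have h3 := hA0 j
      simp only
      linarith
    · rintro s ⟨y, hy01, hlow, _, rfl⟩
      exact Finset.sum_le_sum fun j _ => by linarith [hlow j]
    · intro j; rcases hA j with h|h <;> simp [h]
    · intro j; simp
    · intro j
      have h1 : (0:ℤ) ≤ ∑ k, A k := Finset.sum_nonneg fun k _ => hA0 k
      have h3 := hA0 j
      simp only
      linarith
    · rintro s ⟨y, hy01, hlow, _, rfl⟩
      exact Finset.sum_le_sum fun j _ => by linarith [hlow j]
  · -- B = 1
    subst hB
    by_cases hex : ∃ i, A i = 1
    · -- some A_i = 1 : optimum is y = 1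
      obtain ⟨i, hi⟩ := hex
      have hsum : (1:ℤ) ≤ ∑ k, A k := by
        have h := Finset.single_le_sum (f := A) (fun k _ => hA0 k) (Finset.mem_univ i)
        rw [hi] at h; exact h
      refine ⟨∑ _j : Fin n, (1:ℤ),
        ⟨⟨fun _ => 1, fun _ => Or.inr rfl, ?_, ?_, rfl⟩, ?_⟩,
        ⟨fun _ => 1, fun _ => Or.inr rfl, ?_, ?_, rfl⟩, ?_⟩
      · intro j; simpa using hA1 j
      · intro S hS j hj
        have h1 : ∑ k, A k = ∑ k ∈ S, A k + ∑ k ∈ Sᶜ, A k :=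
          (Finset.sum_add_sum_compl S A).symm
        have h2 : ∑ k ∈ Sᶜ, A k ≤ ∑ k ∈ Sᶜ, (1:ℤ) :=
          Finset.sum_le_sum fun k _ => hA1 k
        simp only
        linarith
      · rintro s ⟨y, hy01, _, _, rfl⟩
        exact Finset.sum_le_sum fun j _ => by rcases hy01 j with h|h <;> simp [h]
      · intro j; simpa using hA1 j
      · intro j; simp only; linarith
      · rintro s ⟨y, hy01, _, _, rfl⟩
        exact Finset.sum_le_sum fun j _ => by rcases hy01 j with h|h <;> simp [h]
    · -- all A_j = 0 : optimum is y = 0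
      push_neg at hex
      have hA0' : ∀ j, A j = 0 := fun j => (hA j).resolve_right (hex j)
      have hsum0 : ∀ T : Finset (Fin n), ∑ k ∈ T, A k = 0 :=
        fun T => Finset.sum_eq_zero fun k _ => hA0' k
      refine ⟨∑ _j : Fin n, (0:ℤ),
        ⟨⟨fun _ => 0, fun _ => Or.inl rfl, ?_, ?_, rfl⟩, ?_⟩,
        ⟨fun _ => 0, fun _ => Or.inl rfl, ?_, ?_, rfl⟩, ?_⟩
      · intro j; simp [hA0' j]
      · intro S hS j hj; simp [hsum0 S]
      · rintro s ⟨y, hy01, _, hupp, rfl⟩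
        have hz : ∀ j, y j ≤ 0 := by
          intro j
          rcases hy01 j with h|h
          · exact le_of_eq h
          · exfalso
            set S : Finset (Fin n) := Finset.univ.filter (fun k => y k = 1) with hSdef
            have hjS : j ∈ S := by simp [hSdef, h]
            have hcon := hupp S ⟨j, hjS⟩ j hjS
            have hSc : ∑ k ∈ Sᶜ, y k = 0 := Finset.sum_eq_zero (by
              intro k hk
              have hk1 : ¬ (y k = 1) := by simpa [hSdef] using hk
              exact (hy01 k).resolve_right hk1)
            rw [hsum0 S, hSc, h] at hcon
            linarith
        exact Finset.sum_le_sum fun j _ => hz j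
      · intro j; simp [hA0' j]
      · intro j; simp [hsum0 Finset.univ]
      · rintro s ⟨y, hy01, _, hupp, rfl⟩
        refine Finset.sum_le_sum fun j _ => ?_
        have := hupp j
        rw [hsum0 Finset.univ] at this
        linarith
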